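/- There is no polynomial translation Weingarten surface r(u,v) = (u,v,f(u)+g(v)) in ℝ³ with both deg f' ≥ 2 and deg g' ≥ 2: if α = f' and β = g' are polynomials of degree ≥ 2, the Jacobian condition ∂(H,K)/∂(u,v) = 0 fails to hold identically. -/

import Mathlib

open Polynomial

section helpers

def TopC (p : Polynomial ℝ) (d : ℕ) (c : ℝ) : Prop :=
  p.natDegree ≤ d ∧ p.coeff d = c

lemma TopC.mul {p q : ℝ[X]} {d e : ℕ} {c c' : ℝ} (hp : TopC p d c) (hq : TopC q e c') :
    TopC (p * q) (d + e) (c * c') :=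
  ⟨natDegree_mul_le.trans (add_le_add hp.1 hq.1), by
    rw [coeff_mul_add_eq_of_natDegree_le hp.1 hq.1, hp.2, hq.2]⟩

lemma TopC.add {p q : ℝ[X]} {d : ℕ} {c c' : ℝ} (hp : TopC p d c) (hq : TopC q d c') :
    TopC (p + q) d (c + c') :=
  ⟨(natDegree_add_le _ _).trans (max_le hp.1 hq.1), by rw [coeff_add, hp.2, hq.2]⟩

lemma TopC.sub {p q : ℝ[X]} {d : ℕ} {c c' : ℝ} (hp : TopC p d c) (hq : TopC q d c') :
    TopC (p - q) d (c - c') :=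
  ⟨(natDegree_sub_le _ _).trans (max_le hp.1 hq.1), by rw [coeff_sub, hp.2, hq.2]⟩

lemma TopC.of_lt {p : ℝ[X]} {d : ℕ} (h : p.natDegree < d) : TopC p d 0 :=
  ⟨h.le, coeff_eq_zero_of_natDegree_lt h⟩

lemma TopC.relax {p : ℝ[X]} {d e : ℕ} {c : ℝ} (hp : TopC p d c) (h : d < e) : TopC p e 0 :=
  TopC.of_lt (lt_of_le_of_lt hp.1 h)

lemma TopC.idx {p : ℝ[X]} {d e : ℕ} {c : ℝ} (hp : TopC p d c) (h : d = e) : TopC p e c := h ▸ hp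

lemma TopC.cval {p : ℝ[X]} {d : ℕ} {c c' : ℝ} (hp : TopC p d c) (h : c = c') : TopC p d c' :=
  h ▸ hp

lemma TopC.congr {p q : ℝ[X]} {d : ℕ} {c : ℝ} (hp : TopC p d c) (h : p = q) : TopC q d c :=
  h ▸ hp

lemma TopC.deriv {p : ℝ[X]} {d : ℕ} {c : ℝ} (hp : TopC p (d + 1) c) :
    TopC (derivative p) d (((d : ℝ) + 1) * c) := by
  refine ⟨(natDegree_derivative_le p).trans (by have := hp.1; omega), ?_⟩
  rw [coeff_derivative, hp.2]; ring

lemma TopC.C_mul {p : ℝ[X]} {d : ℕ} {c : ℝ} (r : ℝ) (hp : TopC p d c) :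
    TopC (C r * p) d (r * c) :=
  ⟨(natDegree_C_mul_le _ _).trans hp.1, by rw [coeff_C_mul, hp.2]⟩

lemma TopC_C (r : ℝ) : TopC (C r) 0 r := ⟨(natDegree_C _).le, coeff_C_zero⟩

lemma hasDerivAt_ratioH (N W : ℝ[X]) (u : ℝ) (hW : 0 < W.eval u) :
    HasDerivAt (fun x => N.eval x / (2 * W.eval x ^ ((3:ℝ)/2)))
      ((N.derivative.eval u * (2 * W.eval u ^ ((3:ℝ)/2))
        - N.eval u * (2 * ((3:ℝ)/2 * W.eval u ^ ((3:ℝ)/2 - 1) * W.derivative.eval u)))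
        / (2 * W.eval u ^ ((3:ℝ)/2)) ^ 2) u := by
  have h2 : HasDerivAt (fun x => W.eval x ^ ((3:ℝ)/2))
      ((3:ℝ)/2 * W.eval u ^ ((3:ℝ)/2 - 1) * W.derivative.eval u) u := by
    have := (Real.hasDerivAt_rpow_const (x := W.eval u) (p := (3:ℝ)/2)
      (Or.inr (by norm_num))).comp u (W.hasDerivAt u)
    simpa [Function.comp_def, mul_assoc] using this
  exact (N.hasDerivAt u).div (h2.const_mul 2) (by positivity)

lemma hasDerivAt_ratioK (N W : ℝ[X]) (u : ℝ) (hW : W.eval u ≠ 0) :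
    HasDerivAt (fun x => N.eval x / W.eval x ^ 2)
      ((N.derivative.eval u * W.eval u ^ 2 - N.eval u * (2 * W.eval u * W.derivative.eval u))
        / (W.eval u ^ 2) ^ 2) u := by
  have h2 : HasDerivAt (fun x => W.eval x ^ 2) (2 * W.eval u * W.derivative.eval u) u := by
    simpa [Pi.pow_def] using (W.hasDerivAt u).pow 2
  exact (N.hasDerivAt u).div h2 (pow_ne_zero _ hW)

end helpers


/-- The mean curvature of the translation surface `r(u,v) = (u,v,f(u)+g(v))`, `α = f'`, `β = g'`. -/
noncomputable def meanCurv (α β : ℝ → ℝ) (u v : ℝ) : ℝ :=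
  ((1 + β v ^ 2) * deriv α u + (1 + α u ^ 2) * deriv β v) /
    (2 * (1 + α u ^ 2 + β v ^ 2) ^ ((3 : ℝ) / 2))

/-- The Gaussian curvature of the translation surface. -/
noncomputable def gaussCurv (α β : ℝ → ℝ) (u v : ℝ) : ℝ :=
  deriv α u * deriv β v / (1 + α u ^ 2 + β v ^ 2) ^ 2

/-- The Jacobian `∂(H,K)/∂(u,v)` of the curvatures. -/
noncomputable def jacobianHK (α β : ℝ → ℝ) (u v : ℝ) : ℝ :=
  deriv (fun x => meanCurv α β x v) u * deriv (fun y => gaussCurv α β u y) v -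
    deriv (fun y => meanCurv α β u y) v * deriv (fun x => gaussCurv α β x v) u

/-- There is no polynomial translation Weingarten surface with both `deg f' ≥ 2` and
`deg g' ≥ 2`: such a surface never satisfies the Jacobian condition identically. -/
theorem stmt_8 (f g : Polynomial ℝ) (hf : 2 ≤ f.derivative.natDegree)
    (hg : 2 ≤ g.derivative.natDegree) :
    ¬ (∀ u v : ℝ,
        jacobianHK (fun x => f.derivative.eval x) (fun y => g.derivative.eval y) u v = 0) := by
  intro hJ
  set Ap := f.derivative with hApdef
  set Bp := g.derivative with hBpdef
  -- the second derivative polynomials of g are nonzero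
  have hBd1 : (1 : ℕ) ≤ (derivative Bp).natDegree := by
    have h1 : Bp.coeff Bp.natDegree ≠ 0 := by
      rw [coeff_natDegree]
      intro h
      rw [leadingCoeff_eq_zero] at h
      simp [h] at hg
    have h2 : (derivative Bp).coeff (Bp.natDegree - 1) ≠ 0 := by
      rw [coeff_derivative]
      rw [show Bp.natDegree - 1 + 1 = Bp.natDegree by omega]
      exact mul_ne_zero h1 (by positivity)
    have := le_natDegree_of_ne_zero h2
    omega
  have hB2 : derivative (derivative Bp) ≠ 0 := by
    intro h
    have := natDegree_eq_zero_of_derivative_eq_zero h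
    omega
  have hB1 : derivative Bp ≠ 0 := by
    intro h
    have : (derivative Bp).natDegree = 0 := by simp [h]
    omega
  -- pick a good point v
  obtain ⟨v, hv⟩ : ∃ v : ℝ, (derivative Bp * derivative (derivative Bp)).eval v ≠ 0 := by
    by_contra h'
    push_neg at h'
    have : derivative Bp * derivative (derivative Bp) = 0 :=
      Polynomial.funext (q := 0) (by simpa using h')
    exact (mul_ne_zero hB1 hB2) this
  rw [eval_mul] at hv
  have hb1 : (derivative Bp).eval v ≠ 0 := fun h => hv (by rw [h, zero_mul])
  have hb2 : (derivative (derivative Bp)).eval v ≠ 0 := fun h => hv (by rw [h, mul_zero])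
  -- set up u-polynomials (with constants from v)
  set Wp : ℝ[X] := 1 + Ap ^ 2 + C (Bp.eval v ^ 2) with hWpdef
  set Np : ℝ[X] := C (1 + Bp.eval v ^ 2) * derivative Ap
      + (1 + Ap ^ 2) * C ((derivative Bp).eval v) with hNpdef
  set QQ : ℝ[X] :=
      (C 2 * (derivative Np * Wp) - C 3 * (Np * derivative Wp)) *
        (C ((derivative (derivative Bp)).eval v) * (derivative Ap * Wp ^ 2)
          - C (4 * (derivative Bp).eval v ^ 2 * Bp.eval v) * (derivative Ap * Wp))
      - (C 2 * ((C (2 * Bp.eval v * (derivative Bp).eval v) * derivative Ap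
            + C ((derivative (derivative Bp)).eval v) * (1 + Ap ^ 2)) * Wp)
          - C (6 * Bp.eval v * (derivative Bp).eval v) * Np) *
        (C ((derivative Bp).eval v) * (derivative (derivative Ap) * Wp ^ 2)
          - C (4 * (derivative Bp).eval v) * (Ap * derivative Ap ^ 2 * Wp)) with hQQdef
  -- Main analytic step: QQ vanishes identically
  have cancel : ∀ {a b c d D1 D2 : ℝ}, D1 ≠ 0 → D2 ≠ 0 →
      a / D1 * (b / D2) - c / D1 * (d / D2) = 0 → a * b - c * d = 0 := by
    intro a b c d D1 D2 h1 h2 h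
    field_simp at h
    linear_combination h
  have key : ∀ u : ℝ, QQ.eval u = 0 := by
    intro u
    have h0 := hJ u v
    simp only [jacobianHK] at h0
    have hWu : 0 < Wp.eval u := by
      rw [hWpdef]; simp only [eval_add, eval_one, eval_pow, eval_C]; positivity
    set Vp : ℝ[X] := C (1 + eval u Ap ^ 2) + Bp ^ 2 with hVpdef
    set Mp : ℝ[X] := (1 + Bp ^ 2) * C (eval u (derivative Ap))
        + C (1 + eval u Ap ^ 2) * derivative Bp with hMpdef
    set KvN : ℝ[X] := C (eval u (derivative Ap)) * derivative Bp with hKvNdef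
    set KuN : ℝ[X] := derivative Ap * C (eval v (derivative Bp)) with hKuNdef
    have hVv : Vp.eval v = Wp.eval u := by
      rw [hVpdef, hWpdef]; simp only [eval_add, eval_one, eval_pow, eval_C]
    have hVv0 : 0 < Vp.eval v := hVv ▸ hWu
    have e1 : (fun x => meanCurv (fun x => eval x Ap) (fun y => eval y Bp) x v)
        = fun x => Np.eval x / (2 * Wp.eval x ^ ((3:ℝ)/2)) := by
      funext x
      simp only [meanCurv, Polynomial.deriv, hNpdef, hWpdef, eval_add, eval_mul, eval_one,
        eval_pow, eval_C]
    have e2 : (fun y => gaussCurv (fun x => eval x Ap) (fun y => eval y Bp) u y)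
        = fun y => KvN.eval y / Vp.eval y ^ 2 := by
      funext y
      simp only [gaussCurv, Polynomial.deriv, hKvNdef, hVpdef, eval_add, eval_mul, eval_one,
        eval_pow, eval_C]
    have e3 : (fun y => meanCurv (fun x => eval x Ap) (fun y => eval y Bp) u y)
        = fun y => Mp.eval y / (2 * Vp.eval y ^ ((3:ℝ)/2)) := by
      funext y
      simp only [meanCurv, Polynomial.deriv, hMpdef, hVpdef, eval_add, eval_mul, eval_one,
        eval_pow, eval_C]
    have e4 : (fun x => gaussCurv (fun x => eval x Ap) (fun y => eval y Bp) x v)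
        = fun x => KuN.eval x / Wp.eval x ^ 2 := by
      funext x
      simp only [gaussCurv, Polynomial.deriv, hKuNdef, hWpdef, eval_add, eval_mul, eval_one,
        eval_pow, eval_C]
    rw [e1, e2, e3, e4, (hasDerivAt_ratioH Np Wp u hWu).deriv,
      (hasDerivAt_ratioK KvN Vp v hVv0.ne').deriv,
      (hasDerivAt_ratioH Mp Vp v hVv0).deriv,
      (hasDerivAt_ratioK KuN Wp u hWu.ne').deriv, hVv] at h0
    have h1 := cancel (by positivity) (by positivity) h0
    rw [hWpdef] at hWu
    simp only [eval_add, eval_one, eval_pow, eval_C] at hWu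
    have h32 : (1 + eval u Ap ^ 2 + eval v Bp ^ 2) ^ ((3:ℝ)/2)
        = (1 + eval u Ap ^ 2 + eval v Bp ^ 2)
          * Real.sqrt (1 + eval u Ap ^ 2 + eval v Bp ^ 2) := by
      rw [show (3:ℝ)/2 = 1 + 1/2 by norm_num, Real.rpow_add hWu, Real.rpow_one,
        Real.sqrt_eq_rpow]
    have h12 : (1 + eval u Ap ^ 2 + eval v Bp ^ 2) ^ ((3:ℝ)/2 - 1)
        = Real.sqrt (1 + eval u Ap ^ 2 + eval v Bp ^ 2) := by
      rw [show (3:ℝ)/2 - 1 = 1/2 by norm_num, Real.sqrt_eq_rpow]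
    simp only [hNpdef, hMpdef, hVpdef, hWpdef, hKvNdef, hKuNdef, derivative_add, derivative_mul,
      derivative_C, derivative_one, derivative_pow, eval_add, eval_mul, eval_C, eval_one,
      eval_pow, zero_mul, mul_zero, add_zero, zero_add, pow_one] at h1
    rw [h32, h12] at h1
    have hs : 0 < Real.sqrt (1 + eval u Ap ^ 2 + eval v Bp ^ 2) := Real.sqrt_pos.2 hWu
    have h2 : Real.sqrt (1 + eval u Ap ^ 2 + eval v Bp ^ 2) * QQ.eval u = 0 := by
      rw [hQQdef]
      simp only [hNpdef, hWpdef, derivative_add, derivative_mul, derivative_C, derivative_one,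
        derivative_pow, eval_add, eval_mul, eval_C, eval_one, eval_pow, eval_sub, zero_mul,
        mul_zero, add_zero, zero_add, pow_one]
      linear_combination h1
    rcases mul_eq_zero.1 h2 with h | h
    · exact absurd h hs.ne'
    · exact h
  -- QQ is the zero polynomial
  have hQ0 : QQ = 0 := Polynomial.funext (q := 0) (by simpa using key)
  -- but its top coefficient is nonzero
  obtain ⟨k, hk⟩ : ∃ k, Ap.natDegree = k + 2 := ⟨Ap.natDegree - 2, by omega⟩
  have hApne : Ap ≠ 0 := fun h => by simp [h] at hf
  set p := Ap.leadingCoeff with hpdef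
  have hp0 : p ≠ 0 := leadingCoeff_ne_zero.2 hApne
  have hA : TopC Ap (k + 2) p := ⟨hk.le, by rw [← hk]; exact coeff_natDegree⟩
  have ha : TopC (derivative Ap) (k + 1) (((k : ℝ) + 2) * p) :=
    ((hA.idx (by omega)).deriv).cval (by push_cast; ring)
  have ha2 : TopC (derivative (derivative Ap)) k (((k : ℝ) + 1) * (((k : ℝ) + 2) * p)) :=
    ((ha.idx rfl).deriv).cval (by push_cast; ring)
  have hW : TopC Wp (2 * k + 4) (p * p) := by
    have h1 : TopC (Ap ^ 2) (2 * k + 4) (p * p) :=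
      ((hA.mul hA).congr (pow_two Ap).symm).idx (by omega)
    have h2 : TopC (1 : ℝ[X]) (2 * k + 4) 0 := TopC.of_lt (by simp)
    have h3 : TopC (C (Bp.eval v ^ 2)) (2 * k + 4) 0 := (TopC_C _).relax (by omega)
    exact ((h2.add h1).add h3).cval (by ring)
  have hW2 : TopC (Wp ^ 2) (4 * k + 8) (p * p * (p * p)) :=
    ((hW.mul hW).congr (pow_two Wp).symm).idx (by omega)
  have hWd : TopC (derivative Wp) (2 * k + 3) (((2 * k : ℝ) + 4) * (p * p)) :=
    ((hW.idx (by omega)).deriv).cval (by push_cast; ring)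
  have hN : TopC Np (2 * k + 4) (p * p * (derivative Bp).eval v) := by
    have h1 : TopC (C (1 + Bp.eval v ^ 2) * derivative Ap) (2 * k + 4) 0 :=
      (ha.C_mul _).relax (by omega)
    have h2 : TopC ((1 + Ap ^ 2) * C ((derivative Bp).eval v)) (2 * k + 4)
        (p * p * (derivative Bp).eval v) := by
      have hb : TopC (1 + Ap ^ 2) (2 * k + 4) (p * p) := by
        have hx : TopC (Ap ^ 2) (2 * k + 4) (p * p) :=
          ((hA.mul hA).congr (pow_two Ap).symm).idx (by omega)
        exact ((TopC.of_lt (p := 1) (by simp)).add hx).cval (by ring)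
      exact ((hb.mul (TopC_C _)).idx (show 2*k+4 + 0 = 2*k+4 by omega))
    exact (h1.add h2).cval (by ring)
  have hNd : TopC (derivative Np) (2 * k + 3)
      (((2 * k : ℝ) + 4) * (p * p * (derivative Bp).eval v)) :=
    ((hN.idx (by omega)).deriv).cval (by push_cast; ring)
  have hX2 : TopC (C 2 * (derivative Np * Wp) - C 3 * (Np * derivative Wp)) (4 * k + 7)
      (2 * (((2 * k : ℝ) + 4) * (p * p * (derivative Bp).eval v) * (p * p))
        - 3 * (p * p * (derivative Bp).eval v * (((2 * k : ℝ) + 4) * (p * p)))) := by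
    have h1 := ((hNd.mul hW).C_mul 2).idx (show 2*k+3 + (2*k+4) = 4*k+7 by omega)
    have h2 := ((hN.mul hWd).C_mul 3).idx (show 2*k+4 + (2*k+3) = 4*k+7 by omega)
    exact h1.sub h2
  have hY4 : TopC (C ((derivative (derivative Bp)).eval v) * (derivative Ap * Wp ^ 2)
      - C (4 * (derivative Bp).eval v ^ 2 * Bp.eval v) * (derivative Ap * Wp)) (5 * k + 9)
      ((derivative (derivative Bp)).eval v * (((k : ℝ) + 2) * p * (p * p * (p * p)))) := by
    have h1 := ((ha.mul hW2).C_mul ((derivative (derivative Bp)).eval v)).idx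
      (show k + 1 + (4 * k + 8) = 5 * k + 9 by omega)
    have h2 : TopC (C (4 * (derivative Bp).eval v ^ 2 * Bp.eval v) * (derivative Ap * Wp))
        (5 * k + 9) 0 := ((ha.mul hW).C_mul _).relax (by omega)
    exact (h1.sub h2).cval (by ring)
  have hZ2 : TopC (C 2 * ((C (2 * Bp.eval v * (derivative Bp).eval v) * derivative Ap
        + C ((derivative (derivative Bp)).eval v) * (1 + Ap ^ 2)) * Wp)
      - C (6 * Bp.eval v * (derivative Bp).eval v) * Np) (4 * k + 8)
      (2 * ((derivative (derivative Bp)).eval v * (p * p) * (p * p))) := by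
    have hin : TopC (C (2 * Bp.eval v * (derivative Bp).eval v) * derivative Ap
        + C ((derivative (derivative Bp)).eval v) * (1 + Ap ^ 2)) (2 * k + 4)
        ((derivative (derivative Bp)).eval v * (p * p)) := by
      have h1 : TopC (C (2 * Bp.eval v * (derivative Bp).eval v) * derivative Ap)
          (2 * k + 4) 0 := (ha.C_mul _).relax (by omega)
      have h2 : TopC (1 + Ap ^ 2) (2 * k + 4) (p * p) := by
        have hx : TopC (Ap ^ 2) (2 * k + 4) (p * p) :=
          ((hA.mul hA).congr (pow_two Ap).symm).idx (by omega)
        exact ((TopC.of_lt (p := 1) (by simp)).add hx).cval (by ring)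
      exact (h1.add (h2.C_mul _)).cval (by ring)
    have h1 := ((hin.mul hW).C_mul 2).idx (show 2*k+4 + (2*k+4) = 4*k+8 by omega)
    have h2 : TopC (C (6 * Bp.eval v * (derivative Bp).eval v) * Np) (4 * k + 8) 0 :=
      (hN.C_mul _).relax (by omega)
    exact (h1.sub h2).cval (by ring)
  have hT4 : TopC (C ((derivative Bp).eval v) * (derivative (derivative Ap) * Wp ^ 2)
      - C (4 * (derivative Bp).eval v) * (Ap * derivative Ap ^ 2 * Wp)) (5 * k + 8)
      ((derivative Bp).eval v * (((k : ℝ) + 1) * (((k : ℝ) + 2) * p) * (p * p * (p * p)))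
        - 4 * (derivative Bp).eval v *
          (p * (((k : ℝ) + 2) * p * (((k : ℝ) + 2) * p)) * (p * p))) := by
    have h1 := ((ha2.mul hW2).C_mul ((derivative Bp).eval v)).idx
      (show k + (4 * k + 8) = 5 * k + 8 by omega)
    have h2 : TopC (Ap * derivative Ap ^ 2 * Wp) (5 * k + 8)
        (p * (((k : ℝ) + 2) * p * (((k : ℝ) + 2) * p)) * (p * p)) :=
      ((hA.mul ((ha.mul ha).congr (pow_two (derivative Ap)).symm)).mul hW).idx (show k+2 + (k+1 + (k+1)) + (2*k+4) = 5*k+8 by omega)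
    exact (h1.sub (h2.C_mul _)).cval (by ring)
  have hQQ : TopC QQ (9 * k + 16)
      ((2 * (((2 * k : ℝ) + 4) * (p * p * (derivative Bp).eval v) * (p * p))
        - 3 * (p * p * (derivative Bp).eval v * (((2 * k : ℝ) + 4) * (p * p))))
        * ((derivative (derivative Bp)).eval v * (((k : ℝ) + 2) * p * (p * p * (p * p))))
      - (2 * ((derivative (derivative Bp)).eval v * (p * p) * (p * p)))
        * ((derivative Bp).eval v * (((k : ℝ) + 1) * (((k : ℝ) + 2) * p) * (p * p * (p * p)))
          - 4 * (derivative Bp).eval v *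
            (p * (((k : ℝ) + 2) * p * (((k : ℝ) + 2) * p)) * (p * p)))) := by
    rw [hQQdef]
    exact ((hX2.mul hY4).idx (show 4*k+7 + (5*k+9) = 9*k+16 by omega)).sub ((hZ2.mul hT4).idx (show 4*k+8 + (5*k+8) = 9*k+16 by omega))
  have hcoeff := hQQ.2
  rw [hQ0] at hcoeff
  simp only [coeff_zero] at hcoeff
  have hval : (0:ℝ) = ((k : ℝ) + 2) * (4 * (k : ℝ) + 10) * p ^ 9
      * (derivative Bp).eval v * (derivative (derivative Bp)).eval v := by
    rw [hcoeff]; ring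
  have : ((k : ℝ) + 2) * (4 * (k : ℝ) + 10) * p ^ 9
      * (derivative Bp).eval v * (derivative (derivative Bp)).eval v ≠ 0 := by
    apply mul_ne_zero
    apply mul_ne_zero
    apply mul_ne_zero
    apply mul_ne_zero
    · positivity
    · positivity
    · exact pow_ne_zero _ hp0
    · exact hb1
    · exact hb2
  exact this hval.symm
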